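/- A Λ-module M (with dimension vector d) lies in the GL(d)-stable hull of the triangular variety Rep^{tri}(≥S) if and only if M admits a filtration governed by S. Equivalently: there exists a basis of K^d adapted to a decomposition induced by S in which all structure maps f_α have the prescribed strictly lower-triangular block form iff M has an S-governed filtration. -/

import Mathlib

open Matrix

section Framework

variable {K : Type*} [Field K] {n : ℕ}

/-- Paths in a quiver on vertices `Fin n` with `B i j` arrows from `i` to `j`. -/
inductive QPath (B : Fin n → Fin n → ℕ) : Fin n → Fin n → Type
  | nil (i : Fin n) : QPath B i i
  | cons {i j k : Fin n} (p : QPath B i j) (a : Fin (B j k)) : QPath B i k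

/-- Length of a path. -/
def QPath.length {B : Fin n → Fin n → ℕ} : ∀ {i j : Fin n}, QPath B i j → ℕ
  | _, _, .nil _ => 0
  | _, _, .cons p _ => p.length + 1

variable (K n) in
/-- A point of the representation space with dimension vector `d`. -/
abbrev RepPt (B : Fin n → Fin n → ℕ) (d : Fin n → ℕ) : Type _ :=
  ∀ i j : Fin n, Fin (B i j) → Matrix (Fin (d j)) (Fin (d i)) K

variable {B : Fin n → Fin n → ℕ} {d : Fin n → ℕ}

/-- The matrix by which a path acts under a representation point. -/
def evalPath (x : RepPt K n B d) : ∀ {i j : Fin n}, QPath B i j → Matrix (Fin (d j)) (Fin (d i)) K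
  | _, _, .nil _ => 1
  | _, _, .cons p a => x _ _ a * evalPath x p

/-- Membership in the representation variety of the truncated path algebra of Loewy length
`L+1`: all paths of length `L+1` act by zero. -/
def InRepTrunc (L : ℕ) (x : RepPt K n B d) : Prop :=
  ∀ (i j : Fin n) (p : QPath B i j), QPath.length p = L + 1 → evalPath x p = 0

/-- Evaluation of a formal `K`-linear combination of parallel paths. -/
noncomputable def evalRel (x : RepPt K n B d) {i j : Fin n} (r : QPath B i j →₀ K) :
    Matrix (Fin (d j)) (Fin (d i)) K :=
  r.sum fun p c => c • evalPath x p

/-- Membership in the representation variety of `KQ/I`, for a family `I` of relations. -/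
def InRep (I : ∀ i j : Fin n, Set (QPath B i j →₀ K)) (x : RepPt K n B d) : Prop :=
  ∀ i j : Fin n, ∀ r ∈ I i j, evalRel x r = 0

/-- The radical series of a subrepresentation `W` (for `W = ⊤`, of the module `M_x`):
`radSerIn x W (l+1)` is spanned by the images of `radSerIn x W l` under the arrows. -/
def radSerIn (x : RepPt K n B d) (W : ∀ i : Fin n, Submodule K (Fin (d i) → K)) :
    ℕ → ∀ i : Fin n, Submodule K (Fin (d i) → K)
  | 0 => W
  | l + 1 => fun j =>
      ⨆ (i : Fin n) (a : Fin (B i j)),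
        Submodule.map (Matrix.mulVecLin (x i j a)) (radSerIn x W l i)

/-- The module carried by the subrepresentation `W` of `M_x` has a filtration governed by the
semisimple sequence `S` (semisimple sequences are recorded by their dimension vectors). -/
def GovernedFiltOn (L : ℕ) (x : RepPt K n B d) (W : ∀ i : Fin n, Submodule K (Fin (d i) → K))
    (S : Fin (L + 1) → Fin n → ℕ) : Prop :=
  ∃ F : Fin (L + 2) → ∀ i : Fin n, Submodule K (Fin (d i) → K),
    (∀ i, F 0 i = W i) ∧ (∀ i, F (Fin.last (L + 1)) i = ⊥) ∧
    (∀ (l : Fin (L + 1)) (i : Fin n), F l.succ i ≤ F l.castSucc i) ∧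
    (∀ (l : Fin (L + 1)) (i j : Fin n) (a : Fin (B i j)),
      Submodule.map (Matrix.mulVecLin (x i j a)) (F l.castSucc i) ≤ F l.succ j) ∧
    (∀ (l : Fin (L + 1)) (i : Fin n),
      Module.finrank K ↥(F l.castSucc i) = Module.finrank K ↥(F l.succ i) + S l i)

/-- The module `M_x` has a filtration governed by `S`. -/
def GovernedFilt (L : ℕ) (x : RepPt K n B d) (S : Fin (L + 1) → Fin n → ℕ) : Prop :=
  GovernedFiltOn L x (fun _ => ⊤) S

/-- The subrepresentation `W` of `M_x` has radical layering `S`. -/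
def HasRadLayeringOn (L : ℕ) (x : RepPt K n B d) (W : ∀ i : Fin n, Submodule K (Fin (d i) → K))
    (S : Fin (L + 1) → Fin n → ℕ) : Prop :=
  (∀ i : Fin n, radSerIn x W (L + 1) i = ⊥) ∧
  ∀ (l : Fin (L + 1)) (i : Fin n),
    Module.finrank K ↥(radSerIn x W (l : ℕ) i) = ∑ j ∈ Finset.Ici l, S j i

/-- The module `M_x` has radical layering `S`. -/
def HasRadLayering (L : ℕ) (x : RepPt K n B d) (S : Fin (L + 1) → Fin n → ℕ) : Prop :=
  HasRadLayeringOn L x (fun _ => ⊤) S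

/-- The dominance order on semisimple sequences. -/
def DomLE {L : ℕ} (S T : Fin (L + 1) → Fin n → ℕ) : Prop :=
  ∀ (l : Fin (L + 1)) (i : Fin n), ∑ j ∈ Finset.Iic l, S j i ≤ ∑ j ∈ Finset.Iic l, T j i

variable (K) in
/-- Realizability of a semisimple sequence over the truncated path algebra. -/
def Realizable (L : ℕ) (B : Fin n → Fin n → ℕ) (S : Fin (L + 1) → Fin n → ℕ) : Prop :=
  ∃ x : RepPt K n B (fun i => ∑ l, S l i), InRepTrunc L x ∧ HasRadLayering L x S

/-- Realizability of a semisimple sequence over `KQ/I`. -/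
def RealizableRel (I : ∀ i j : Fin n, Set (QPath B i j →₀ K)) (L : ℕ)
    (S : Fin (L + 1) → Fin n → ℕ) : Prop :=
  ∃ x : RepPt K n B (fun i => ∑ l, S l i), InRep I x ∧ HasRadLayering L x S

/-- Coordinates of the affine space of representation points. -/
abbrev CoordIx (n : ℕ) (B : Fin n → Fin n → ℕ) (d : Fin n → ℕ) : Type :=
  Σ i : Fin n, Σ j : Fin n, Fin (B i j) × Fin (d j) × Fin (d i)

def coords (x : RepPt K n B d) : CoordIx n B d → K :=
  fun c => x c.1 c.2.1 c.2.2.1 c.2.2.2.1 c.2.2.2.2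

/-- Zariski-closed subsets of the affine space of representation points. -/
def ZClosed (Z : Set (RepPt K n B d)) : Prop :=
  ∃ P : Set (MvPolynomial (CoordIx n B d) K),
    Z = {x | ∀ f ∈ P, MvPolynomial.eval (coords x) f = 0}

/-- `T` is Zariski-closed in the subvariety `V`. -/
def ZClosedIn (V T : Set (RepPt K n B d)) : Prop :=
  ∃ Z : Set (RepPt K n B d), ZClosed Z ∧ T = V ∩ Z

/-- The Zariski closure of `C` inside `V`. -/
def ZClosureIn (V C : Set (RepPt K n B d)) : Set (RepPt K n B d) :=
  {x | x ∈ V ∧ ∀ Z : Set (RepPt K n B d), ZClosed Z → C ⊆ Z → x ∈ Z}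

/-- Irreducibility of a subset in the Zariski topology. -/
def ZIrred (C : Set (RepPt K n B d)) : Prop :=
  C.Nonempty ∧ ∀ Z₁ Z₂ : Set (RepPt K n B d), ZClosed Z₁ → ZClosed Z₂ →
    C ⊆ Z₁ ∪ Z₂ → C ⊆ Z₁ ∨ C ⊆ Z₂

/-- `C` is an irreducible component (a maximal irreducible subset) of `V`. -/
def IsIrredComponentOf (V C : Set (RepPt K n B d)) : Prop :=
  ZIrred C ∧ C ⊆ V ∧ ∀ C' : Set (RepPt K n B d), ZIrred C' → C' ⊆ V → C ⊆ C' → C' = C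

/-- The triangularity conditions (i) and (ii) on a representation point, relative to a
decomposition `C` of the spaces at the vertices. -/
def Triangular (L : ℕ) (x : RepPt K n B d)
    (C : Fin (L + 1) → ∀ i : Fin n, Submodule K (Fin (d i) → K)) : Prop :=
  ∀ (l : Fin (L + 1)) (i j : Fin n) (a : Fin (B i j)),
    Submodule.map (Matrix.mulVecLin (x i j a)) (C l i) ≤ ⨆ (m : Fin (L + 1)) (_ : l < m), C m j

/-- `C` is a decomposition of `K^d` induced by the semisimple sequence `S`. -/
def IsInducedDecomp (L : ℕ) (d : Fin n → ℕ) (S : Fin (L + 1) → Fin n → ℕ)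
    (C : Fin (L + 1) → ∀ i : Fin n, Submodule K (Fin (d i) → K)) : Prop :=
  (∀ i : Fin n, (⨆ l : Fin (L + 1), C l i) = ⊤) ∧
  (∀ (l : Fin (L + 1)) (i : Fin n), Module.finrank K ↥(C l i) = S l i) ∧
  (∀ i : Fin n, ∑ l : Fin (L + 1), S l i = d i)

end Framework

section StdBlock

variable {K : Type*} [Field K] {n : ℕ}

/-- The standard decomposition of `K^d` induced by the semisimple sequence `S`: at vertex `i`,
the `l`-th block consists of the coordinate functions supported on the coordinates `r` with
`∑_{m < l} S m i ≤ r < ∑_{m ≤ l} S m i`. -/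
def stdBlock (L : ℕ) (d : Fin n → ℕ) (S : Fin (L + 1) → Fin n → ℕ) (l : Fin (L + 1))
    (i : Fin n) : Submodule K (Fin (d i) → K) where
  carrier := {v | ∀ r : Fin (d i),
    ((r : ℕ) < ∑ m ∈ Finset.Iio l, S m i ∨ ∑ m ∈ Finset.Iic l, S m i ≤ (r : ℕ)) → v r = 0}
  add_mem' := by
    intro a b ha hb r hr
    rw [Pi.add_apply, ha r hr, hb r hr, add_zero]
  zero_mem' := fun r _ => rfl
  smul_mem' := by
    intro c v hv r hr
    rw [Pi.smul_apply, hv r hr, smul_zero]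

end StdBlock

namespace GLHull

open Submodule


variable {K : Type*} [Field K] {n : ℕ}

/-- Offset: sum of S m i over m with (m:ℕ) < t. -/
def Aoff (L : ℕ) (S : Fin (L + 1) → Fin n → ℕ) (t : ℕ) (i : Fin n) : ℕ :=
  ∑ m ∈ Finset.univ.filter (fun m : Fin (L + 1) => (m : ℕ) < t), S m i

lemma Aoff_zero (L : ℕ) (S : Fin (L + 1) → Fin n → ℕ) (i : Fin n) : Aoff L S 0 i = 0 := by
  simp [Aoff]

lemma Aoff_mono (L : ℕ) (S : Fin (L + 1) → Fin n → ℕ) {t t' : ℕ} (h : t ≤ t') (i : Fin n) :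
    Aoff L S t i ≤ Aoff L S t' i := by
  apply Finset.sum_le_sum_of_subset
  intro m hm
  simp only [Finset.mem_filter, Finset.mem_univ, true_and] at *
  omega

lemma Aoff_succ (L : ℕ) (S : Fin (L + 1) → Fin n → ℕ) {t : ℕ} (h : t < L + 1) (i : Fin n) :
    Aoff L S (t + 1) i = Aoff L S t i + S ⟨t, h⟩ i := by
  unfold Aoff
  have hset : Finset.univ.filter (fun m : Fin (L + 1) => (m : ℕ) < t + 1)
      = insert ⟨t, h⟩ (Finset.univ.filter (fun m : Fin (L + 1) => (m : ℕ) < t)) := by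
    ext m
    simp only [Finset.mem_filter, Finset.mem_univ, true_and, Finset.mem_insert]
    constructor
    · intro hm
      rcases Nat.lt_succ_iff_lt_or_eq.mp hm with h' | h'
      · exact Or.inr h'
      · exact Or.inl (Fin.ext h')
    · rintro (rfl | hm)
      · simp
      · omega
  rw [hset, Finset.sum_insert (by simp)]
  ring

lemma Aoff_last (L : ℕ) (S : Fin (L + 1) → Fin n → ℕ) (i : Fin n) :
    Aoff L S (L + 1) i = ∑ l, S l i := by
  unfold Aoff
  congr 1
  apply Finset.filter_true_of_mem
  intro m _
  exact m.isLt

variable (K) in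
/-- Tail subspace: coordinates below `Aoff L S t i` vanish. -/
def tailB (L : ℕ) (d : Fin n → ℕ) (S : Fin (L + 1) → Fin n → ℕ) (t : ℕ) (i : Fin n) :
    Submodule K (Fin (d i) → K) where
  carrier := {v | ∀ r : Fin (d i), (r : ℕ) < Aoff L S t i → v r = 0}
  add_mem' := by
    intro a b ha hb r hr
    rw [Pi.add_apply, ha r hr, hb r hr, add_zero]
  zero_mem' := fun r _ => rfl
  smul_mem' := by
    intro c v hv r hr
    rw [Pi.smul_apply, hv r hr, smul_zero]

variable {L : ℕ} {d : Fin n → ℕ} {S : Fin (L + 1) → Fin n → ℕ}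

lemma mem_tailB {t : ℕ} {i : Fin n} {v : Fin (d i) → K} :
    v ∈ tailB K L d S t i ↔ ∀ r : Fin (d i), (r : ℕ) < Aoff L S t i → v r = 0 := Iff.rfl

lemma tailB_anti {t t' : ℕ} (h : t ≤ t') (i : Fin n) :
    tailB K L d S t' i ≤ tailB K L d S t i :=
  fun _ hv r hr => hv r (lt_of_lt_of_le hr (Aoff_mono L S h i))

lemma tailB_zero (i : Fin n) : tailB K L d S 0 i = ⊤ := by
  rw [eq_top_iff]
  intro v _ r hr
  rw [Aoff_zero] at hr
  omega

lemma tailB_last {i : Fin n} (hS : ∑ l, S l i = d i) : tailB K L d S (L + 1) i = ⊥ := by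
  rw [eq_bot_iff]
  intro v hv
  have : v = 0 := by
    funext r
    apply hv r
    rw [Aoff_last, hS]
    exact r.isLt
  simp [this]

lemma single_mem_tailB {t : ℕ} {i : Fin n} {r : Fin (d i)} (h : Aoff L S t i ≤ (r : ℕ)) :
    Pi.single r (1 : K) ∈ tailB K L d S t i := by
  intro r' hr'
  exact Pi.single_eq_of_ne (Fin.ne_of_val_ne (by omega)) 1

lemma tailB_eq_span (t : ℕ) (i : Fin n) :
    tailB K L d S t i
      = Submodule.span K ((fun r : Fin (d i) => Pi.single r (1 : K)) ''
          {r : Fin (d i) | Aoff L S t i ≤ (r : ℕ)}) := by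
  apply le_antisymm
  · intro v hv
    have hv' : v = ∑ r ∈ Finset.univ.filter (fun r : Fin (d i) => Aoff L S t i ≤ (r : ℕ)),
        Pi.single r (v r) := by
      rw [Finset.sum_filter_of_ne]
      · exact (Finset.univ_sum_single v).symm
      · intro r _ hne
        by_contra hc
        exact hne (by rw [hv r (by omega), Pi.single_zero])
    rw [hv']
    apply Submodule.sum_mem
    intro r hr
    simp only [Finset.mem_filter, Finset.mem_univ, true_and] at hr
    have : (Pi.single r (v r) : Fin (d i) → K) = v r • (Pi.single r (1 : K) : Fin (d i) → K) := by
      funext r'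
      by_cases h : r' = r
      · subst h; simp
      · simp [Pi.single_eq_of_ne h]
    rw [this]
    exact Submodule.smul_mem _ _ (Submodule.subset_span ⟨r, hr, rfl⟩)
  · rw [Submodule.span_le]
    rintro _ ⟨r, hr, rfl⟩
    exact single_mem_tailB hr

/-- Subtype of a tail of `Fin N` is equivalent to `Fin (N - c)`. -/
def tailEquiv (N c : ℕ) : {r : Fin N // c ≤ (r : ℕ)} ≃ Fin (N - c) where
  toFun r := ⟨(r : Fin N) - c, by have := r.1.isLt; have := r.2; omega⟩
  invFun k := ⟨⟨c + (k : ℕ), by have := k.isLt; omega⟩, by simp⟩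
  left_inv r := by
    apply Subtype.ext
    apply Fin.ext
    have := r.2
    simp only []
    omega
  right_inv k := by
    apply Fin.ext
    simp only []
    omega

lemma finrank_tailB (t : ℕ) (i : Fin n) :
    Module.finrank K ↥(tailB K L d S t i) = d i - Aoff L S t i := by
  classical
  have hli : LinearIndependent K
      (fun r : {r : Fin (d i) // Aoff L S t i ≤ (r : ℕ)} =>
        (Pi.single (r : Fin (d i)) (1 : K) : Fin (d i) → K)) := by
    have hb := (Pi.basisFun K (Fin (d i))).linearIndependent
    have := hb.comp (Subtype.val : {r : Fin (d i) // Aoff L S t i ≤ (r : ℕ)} → Fin (d i))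
      Subtype.val_injective
    simpa [Function.comp_def] using this
  have hspan : tailB K L d S t i = Submodule.span K
      (Set.range (fun r : {r : Fin (d i) // Aoff L S t i ≤ (r : ℕ)} =>
        (Pi.single (r : Fin (d i)) (1 : K) : Fin (d i) → K))) := by
    rw [tailB_eq_span]
    congr 1
    exact Set.image_eq_range _ _
  rw [hspan, finrank_span_eq_card hli, Fintype.card_congr (tailEquiv (d i) (Aoff L S t i)),
    Fintype.card_fin]

lemma sum_Iio (l : Fin (L + 1)) (i : Fin n) :
    ∑ m ∈ Finset.Iio l, S m i = Aoff L S (l : ℕ) i := by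
  unfold Aoff
  congr 1
  ext m
  simp only [Finset.mem_Iio, Finset.mem_filter, Finset.mem_univ, true_and,
    Fin.lt_iff_val_lt_val]

lemma sum_Iic (l : Fin (L + 1)) (i : Fin n) :
    ∑ m ∈ Finset.Iic l, S m i = Aoff L S ((l : ℕ) + 1) i := by
  unfold Aoff
  congr 1
  ext m
  simp only [Finset.mem_Iic, Finset.mem_filter, Finset.mem_univ, true_and,
    Fin.le_iff_val_le_val, Nat.lt_succ_iff]

lemma mem_stdBlock {l : Fin (L + 1)} {i : Fin n} {v : Fin (d i) → K} :
    v ∈ stdBlock L d S l i ↔ ∀ r : Fin (d i),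
      ((r : ℕ) < Aoff L S (l : ℕ) i ∨ Aoff L S ((l : ℕ) + 1) i ≤ (r : ℕ)) → v r = 0 := by
  rw [← sum_Iio l i, ← sum_Iic l i]
  exact Iff.rfl

lemma stdBlock_le_tailB (l : Fin (L + 1)) (i : Fin n) :
    stdBlock L d S l i ≤ tailB K L d S (l : ℕ) i := by
  intro v hv r hr
  exact mem_stdBlock.mp hv r (Or.inl hr)

lemma single_mem_stdBlock {l : Fin (L + 1)} {i : Fin n} {r : Fin (d i)}
    (h1 : Aoff L S (l : ℕ) i ≤ (r : ℕ)) (h2 : (r : ℕ) < Aoff L S ((l : ℕ) + 1) i) :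
    Pi.single r (1 : K) ∈ stdBlock L d S l i := by
  rw [mem_stdBlock]
  intro r' hr'
  exact Pi.single_eq_of_ne (Fin.ne_of_val_ne (by omega)) 1

lemma exists_block_aux (i : Fin n) (r : Fin (d i)) :
    ∀ u : ℕ, (r : ℕ) < Aoff L S u i →
      ∃ m : ℕ, m < u ∧ Aoff L S m i ≤ (r : ℕ) ∧ (r : ℕ) < Aoff L S (m + 1) i := by
  intro u
  induction u with
  | zero => intro h; rw [Aoff_zero] at h; omega
  | succ u ih =>
    intro h
    by_cases hu : Aoff L S u i ≤ (r : ℕ)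
    · exact ⟨u, Nat.lt_succ_self u, hu, h⟩
    · obtain ⟨m, hm, h1, h2⟩ := ih (by omega)
      exact ⟨m, by omega, h1, h2⟩

lemma exists_block (hS : ∑ l, S l i = d i) (r : Fin (d i)) :
    ∃ m : Fin (L + 1), Aoff L S (m : ℕ) i ≤ (r : ℕ) ∧ (r : ℕ) < Aoff L S ((m : ℕ) + 1) i := by
  have hr : (r : ℕ) < Aoff L S (L + 1) i := by
    rw [Aoff_last, hS]; exact r.isLt
  obtain ⟨m, hm, h1, h2⟩ := exists_block_aux i r (L + 1) hr
  exact ⟨⟨m, hm⟩, h1, h2⟩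

lemma block_unique {i : Fin n} {r : Fin (d i)} {m m' : Fin (L + 1)}
    (h1 : Aoff L S (m : ℕ) i ≤ (r : ℕ)) (h2 : (r : ℕ) < Aoff L S ((m : ℕ) + 1) i)
    (h1' : Aoff L S (m' : ℕ) i ≤ (r : ℕ)) (h2' : (r : ℕ) < Aoff L S ((m' : ℕ) + 1) i) :
    m = m' := by
  apply Fin.ext
  rcases lt_trichotomy (m : ℕ) (m' : ℕ) with h | h | h
  · have := Aoff_mono L S (show (m : ℕ) + 1 ≤ (m' : ℕ) from h) i
    omega
  · exact h
  · have := Aoff_mono L S (show (m' : ℕ) + 1 ≤ (m : ℕ) from h) i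
    omega

lemma tailB_le_iSup {i : Fin n} (hS : ∑ l, S l i = d i) (t : ℕ) :
    tailB K L d S t i ≤ ⨆ (m : Fin (L + 1)) (_ : t ≤ (m : ℕ)), stdBlock L d S m i := by
  rw [tailB_eq_span, Submodule.span_le]
  rintro _ ⟨r, hr, rfl⟩
  obtain ⟨m, h1, h2⟩ := exists_block hS r
  have htm : t ≤ (m : ℕ) := by
    by_contra hc
    have := Aoff_mono L S (show (m : ℕ) + 1 ≤ t from by omega) i
    simp only [Set.mem_setOf_eq] at hr
    omega
  exact Submodule.mem_iSup_of_mem m (Submodule.mem_iSup_of_mem htm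
    (single_mem_stdBlock h1 h2))

lemma iSup_le_tailB (i : Fin n) (t : ℕ) :
    (⨆ (m : Fin (L + 1)) (_ : t ≤ (m : ℕ)), stdBlock L d S m i) ≤ tailB K L d S t i :=
  iSup_le fun m => iSup_le fun hm => (stdBlock_le_tailB m i).trans (tailB_anti hm i)

section Conj
variable {B : Fin n → Fin n → ℕ} {d : Fin n → ℕ}

lemma evalPath_conj (x x' : RepPt K n B d) (u v : ∀ i : Fin n, Matrix (Fin (d i)) (Fin (d i)) K)
    (huv : ∀ i, u i * v i = 1) (hvu : ∀ i, v i * u i = 1)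
    (hx' : ∀ i j a, x' i j a = v j * x i j a * u i) :
    ∀ (i j : Fin n) (p : QPath B i j), evalPath x' p = v j * evalPath x p * u i := by
  intro i j p
  induction p with
  | nil => simp [evalPath, hvu]
  | @cons j' k' p a ih =>
    simp only [evalPath]
    rw [ih, hx']
    simp only [Matrix.mul_assoc]
    rw [← Matrix.mul_assoc (u j') (v j'), huv j', Matrix.one_mul]

lemma evalRel_conj (x x' : RepPt K n B d) (u v : ∀ i : Fin n, Matrix (Fin (d i)) (Fin (d i)) K)
    (huv : ∀ i, u i * v i = 1) (hvu : ∀ i, v i * u i = 1)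
    (hx' : ∀ i j a, x' i j a = v j * x i j a * u i)
    {i j : Fin n} (r : QPath B i j →₀ K) :
    evalRel x' r = v j * evalRel x r * u i := by
  rw [evalRel, evalRel, Finsupp.sum, Finsupp.sum, Matrix.mul_sum, Matrix.sum_mul]
  apply Finset.sum_congr rfl
  intro p _
  rw [evalPath_conj x x' u v huv hvu hx' i j p, Matrix.mul_smul, Matrix.smul_mul]

lemma inRep_conj (I : ∀ i j : Fin n, Set (QPath B i j →₀ K)) (x x' : RepPt K n B d)
    (u v : ∀ i : Fin n, Matrix (Fin (d i)) (Fin (d i)) K)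
    (huv : ∀ i, u i * v i = 1) (hvu : ∀ i, v i * u i = 1)
    (hx' : ∀ i j a, x' i j a = v j * x i j a * u i)
    (hx : InRep I x) : InRep I x' := by
  intro i j r hr
  rw [evalRel_conj x x' u v huv hvu hx' r, hx i j r hr, Matrix.mul_zero, Matrix.zero_mul]

end Conj

section GLEquiv

/-- The linear automorphism of `Fin m → K` given by an element of `GL`. -/
def glEquiv {m : ℕ} (g : GL (Fin m) K) : (Fin m → K) ≃ₗ[K] (Fin m → K) :=
  LinearEquiv.ofLinear (Matrix.mulVecLin g.val) (Matrix.mulVecLin (g⁻¹).val)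
    (by rw [← Matrix.mulVecLin_mul, ← Matrix.GeneralLinearGroup.coe_mul, mul_inv_cancel,
      Matrix.GeneralLinearGroup.coe_one, Matrix.mulVecLin_one])
    (by rw [← Matrix.mulVecLin_mul, ← Matrix.GeneralLinearGroup.coe_mul, inv_mul_cancel,
      Matrix.GeneralLinearGroup.coe_one, Matrix.mulVecLin_one])

@[simp] lemma glEquiv_coe {m : ℕ} (g : GL (Fin m) K) :
    (glEquiv g : (Fin m → K) →ₗ[K] (Fin m → K)) = Matrix.mulVecLin g.val := rfl

end GLEquiv

section Forward

variable {B : Fin n → Fin n → ℕ}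

lemma forward {L : ℕ} {d : Fin n → ℕ} {S : Fin (L + 1) → Fin n → ℕ}
    (hS : ∀ i, ∑ l, S l i = d i) (x x' : RepPt K n B d) (g : ∀ i : Fin n, GL (Fin (d i)) K)
    (htri : Triangular L x' (stdBlock L d S))
    (hconj : x = fun i j a => (g j).val * x' i j a * ((g i)⁻¹).val) :
    GovernedFilt L x S := by
  refine ⟨fun l i => Submodule.map (Matrix.mulVecLin (g i).val) (tailB K L d S (l : ℕ) i),
    ?_, ?_, ?_, ?_, ?_⟩
  · intro i
    show Submodule.map (Matrix.mulVecLin (g i).val) (tailB K L d S ((0 : Fin (L+2)) : ℕ) i) = ⊤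
    rw [show ((0 : Fin (L+2)) : ℕ) = 0 from rfl, tailB_zero, Submodule.map_top]
    exact LinearMap.range_eq_top.mpr (glEquiv (g i)).surjective
  · intro i
    show Submodule.map (Matrix.mulVecLin (g i).val)
      (tailB K L d S ((Fin.last (L+1)) : ℕ) i) = ⊥
    rw [show ((Fin.last (L+1)) : ℕ) = L + 1 from rfl, tailB_last (hS i), Submodule.map_bot]
  · intro l i
    exact Submodule.map_mono (tailB_anti (by simp) i)
  · intro l i j a
    show Submodule.map (Matrix.mulVecLin (x i j a))
        (Submodule.map (Matrix.mulVecLin (g i).val) (tailB K L d S ((l.castSucc : Fin (L+2)) : ℕ) i))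
      ≤ Submodule.map (Matrix.mulVecLin (g j).val) (tailB K L d S ((l.succ : Fin (L+2)) : ℕ) j)
    have hx : x i j a = (g j).val * x' i j a * ((g i)⁻¹).val := by rw [hconj]
    rw [hx, Matrix.mulVecLin_mul, Matrix.mulVecLin_mul, Submodule.map_comp, Submodule.map_comp,
      ← Submodule.map_comp (Matrix.mulVecLin (g i).val), ← Matrix.mulVecLin_mul,
      ← Matrix.GeneralLinearGroup.coe_mul, inv_mul_cancel, Matrix.GeneralLinearGroup.coe_one,
      Matrix.mulVecLin_one, Submodule.map_id]
    apply Submodule.map_mono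
    refine le_trans (Submodule.map_mono (tailB_le_iSup (hS i) ((l.castSucc : Fin (L+2)) : ℕ))) ?_
    rw [Submodule.map_iSup]
    apply iSup_le; intro m
    rw [Submodule.map_iSup]
    apply iSup_le; intro hm
    refine le_trans (htri m i j a) ?_
    apply iSup_le; intro m'
    apply iSup_le; intro hm'
    refine le_trans (stdBlock_le_tailB m' j) (tailB_anti ?_ j)
    have h1 : (m : ℕ) < (m' : ℕ) := Fin.lt_def.mp hm'
    have h2 : ((l.castSucc : Fin (L+2)) : ℕ) ≤ (m : ℕ) := hm
    show ((l.succ : Fin (L+2)) : ℕ) ≤ (m' : ℕ)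
    rw [Fin.coe_castSucc] at h2
    rw [Fin.val_succ]
    omega
  · intro l i
    have e1 : Module.finrank K ↥(Submodule.map (Matrix.mulVecLin (g i).val)
          (tailB K L d S ((l.castSucc : Fin (L+2)) : ℕ) i)) = d i - Aoff L S (l : ℕ) i :=
      (LinearEquiv.finrank_map_eq (glEquiv (g i)) _).trans (finrank_tailB _ i)
    have e2 : Module.finrank K ↥(Submodule.map (Matrix.mulVecLin (g i).val)
          (tailB K L d S ((l.succ : Fin (L+2)) : ℕ) i)) = d i - Aoff L S ((l : ℕ) + 1) i :=
      (LinearEquiv.finrank_map_eq (glEquiv (g i)) _).trans (finrank_tailB _ i)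
    show Module.finrank K ↥(Submodule.map (Matrix.mulVecLin (g i).val)
          (tailB K L d S ((l.castSucc : Fin (L+2)) : ℕ) i))
        = Module.finrank K ↥(Submodule.map (Matrix.mulVecLin (g i).val)
          (tailB K L d S ((l.succ : Fin (L+2)) : ℕ) i)) + S l i
    rw [e1, e2]
    have hsucc := Aoff_succ L S l.isLt i
    simp only [Fin.eta] at hsucc
    have hle : Aoff L S ((l : ℕ) + 1) i ≤ d i := by
      have h := Aoff_mono L S (show (l : ℕ) + 1 ≤ L + 1 by omega) i
      rw [Aoff_last, hS i] at h
      exact h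
    omega

end Forward

section Backward

lemma exists_compl_between {V : Type*} [AddCommGroup V] [Module K V] [FiniteDimensional K V]
    {U U' : Submodule K V} (h : U ≤ U') :
    ∃ W : Submodule K V, U ⊓ W = ⊥ ∧ U ⊔ W = U' ∧
      Module.finrank K ↥W + Module.finrank K ↥U = Module.finrank K ↥U' := by
  obtain ⟨q, hq⟩ := (Submodule.comap U'.subtype U).exists_isCompl
  have hU : Submodule.map U'.subtype (Submodule.comap U'.subtype U) = U :=
    (Submodule.map_comap_subtype _ _).trans (inf_eq_right.mpr h)
  refine ⟨Submodule.map U'.subtype q, ?_, ?_, ?_⟩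
  · rw [← hU, ← Submodule.map_inf _ U'.injective_subtype, hq.inf_eq_bot, Submodule.map_bot]
  · rw [← hU, ← Submodule.map_sup, hq.sup_eq_top, Submodule.map_top, Submodule.range_subtype]
  · have hfr := Submodule.finrank_sup_add_finrank_inf_eq U (Submodule.map U'.subtype q)
    rw [← hU, ← Submodule.map_inf _ U'.injective_subtype, hq.inf_eq_bot, Submodule.map_bot,
      ← Submodule.map_sup, hq.sup_eq_top, Submodule.map_top, Submodule.range_subtype, hU] at hfr
    rw [finrank_bot, add_zero] at hfr
    omega

variable {L : ℕ} {d : Fin n → ℕ} {S : Fin (L + 1) → Fin n → ℕ}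

lemma exists_basis_fun (i : Fin n) (hSi : ∑ l, S l i = d i)
    (F : Fin (L + 2) → ∀ i : Fin n, Submodule K (Fin (d i) → K))
    (hF0 : F 0 i = ⊤) (hFlast : F (Fin.last (L + 1)) i = ⊥)
    (hdec : ∀ l : Fin (L + 1), F l.succ i ≤ F l.castSucc i)
    (hdim : ∀ l : Fin (L + 1),
      Module.finrank K ↥(F l.castSucc i) = Module.finrank K ↥(F l.succ i) + S l i) :
    ∃ b : Fin (d i) → (Fin (d i) → K),
      ∀ t : Fin (L + 2),
        Submodule.span K (b '' {r : Fin (d i) | Aoff L S (t : ℕ) i ≤ (r : ℕ)}) = F t i := by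
  classical
  choose W hWinf hWsup hWrank using fun l : Fin (L + 1) => exists_compl_between (hdec l)
  have hfrW : ∀ l : Fin (L + 1), Module.finrank K ↥(W l) = S l i := by
    intro l
    have h1 := hWrank l
    have h2 := hdim l
    omega
  let cbas : ∀ l : Fin (L + 1), Module.Basis (Fin (S l i)) K ↥(W l) :=
    fun l => Module.finBasisOfFinrankEq K ↥(W l) (hfrW l)
  choose blk hblk1 hblk2 using fun r : Fin (d i) => exists_block hSi r
  have hidx : ∀ r : Fin (d i), (r : ℕ) - Aoff L S ((blk r : Fin (L+1)) : ℕ) i < S (blk r) i := by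
    intro r
    have h0 := Aoff_succ L S (blk r).isLt i
    simp only [Fin.eta] at h0
    have h1 := hblk1 r
    have h2 := hblk2 r
    omega
  set b : Fin (d i) → (Fin (d i) → K) :=
    fun r => ((cbas (blk r)) ⟨(r : ℕ) - Aoff L S ((blk r : Fin (L+1)) : ℕ) i, hidx r⟩ :
      ↥(W (blk r))).val with hbdef
  have bspec : ∀ (r : Fin (d i)) (m : Fin (L + 1)) (h1 : Aoff L S (m : ℕ) i ≤ (r : ℕ))
      (h2 : (r : ℕ) < Aoff L S ((m : ℕ) + 1) i)
      (pf : (r : ℕ) - Aoff L S (m : ℕ) i < S m i),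
      b r = ((cbas m) ⟨(r : ℕ) - Aoff L S (m : ℕ) i, pf⟩ : ↥(W m)).val := by
    intro r m h1 h2 pf
    have hm : blk r = m := block_unique (hblk1 r) (hblk2 r) h1 h2
    subst hm
    rfl
  have key : ∀ k : ℕ, ∀ t : ℕ, t = L + 1 - k → ∀ ht : t < L + 2,
      Submodule.span K (b '' {r : Fin (d i) | Aoff L S t i ≤ (r : ℕ)}) = F ⟨t, ht⟩ i := by
    intro k
    induction k with
    | zero =>
      intro t htv ht
      subst htv
      have hempty : {r : Fin (d i) | Aoff L S (L + 1 - 0) i ≤ (r : ℕ)} = ∅ := by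
        ext r
        simp only [Set.mem_setOf_eq, Set.mem_empty_iff_false, iff_false, not_le]
        have h1 : Aoff L S (L + 1 - 0) i = d i := by
          rw [show L + 1 - 0 = L + 1 from rfl, Aoff_last, hSi]
        rw [h1]
        exact r.isLt
      rw [hempty, Set.image_empty, Submodule.span_empty]
      exact hFlast.symm
    | succ k ih =>
      intro t htv ht
      by_cases hk : k ≤ L
      · have htL : t < L + 1 := by omega
        have ih' := ih (t + 1) (by omega) (by omega)
        have hAsucc : Aoff L S (t + 1) i = Aoff L S t i + S ⟨t, htL⟩ i := Aoff_succ L S htL i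
        have hAle : Aoff L S (t + 1) i ≤ d i := by
          have h := Aoff_mono L S (show t + 1 ≤ L + 1 by omega) i
          rw [Aoff_last, hSi] at h
          exact h
        have hsplit : {r : Fin (d i) | Aoff L S t i ≤ (r : ℕ)}
            = {r : Fin (d i) | Aoff L S (t + 1) i ≤ (r : ℕ)}
              ∪ {r : Fin (d i) | Aoff L S t i ≤ (r : ℕ) ∧ (r : ℕ) < Aoff L S (t + 1) i} := by
          ext r
          have hmono := Aoff_mono L S (Nat.le_succ t) i
          simp only [Set.mem_setOf_eq, Set.mem_union]
          omega
        rw [hsplit, Set.image_union, Submodule.span_union, ih']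
        have hmid : Submodule.span K
            (b '' {r : Fin (d i) | Aoff L S t i ≤ (r : ℕ) ∧ (r : ℕ) < Aoff L S (t + 1) i})
            = W ⟨t, htL⟩ := by
          apply le_antisymm
          · rw [Submodule.span_le]
            rintro _ ⟨r, ⟨hr1, hr2⟩, rfl⟩
            rw [bspec r ⟨t, htL⟩ hr1 hr2
              (show (r : ℕ) - Aoff L S t i < S ⟨t, htL⟩ i by omega)]
            exact SetLike.coe_mem _
          · have hWspan : W ⟨t, htL⟩ = Submodule.span K
                ((W ⟨t, htL⟩).subtype '' Set.range (cbas ⟨t, htL⟩)) := by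
              rw [← Submodule.map_span, (cbas ⟨t, htL⟩).span_eq, Submodule.map_top,
                Submodule.range_subtype]
            rw [hWspan]
            apply Submodule.span_mono
            rintro _ ⟨_, ⟨kk, rfl⟩, rfl⟩
            have hkk := kk.isLt
            have hrlt : Aoff L S t i + (kk : ℕ) < d i := by omega
            have hmem : (⟨Aoff L S t i + (kk : ℕ), hrlt⟩ : Fin (d i)) ∈
                {r : Fin (d i) | Aoff L S t i ≤ (r : ℕ) ∧ (r : ℕ) < Aoff L S (t + 1) i} := by
              constructor
              · show Aoff L S t i ≤ Aoff L S t i + (kk : ℕ)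
                omega
              · show Aoff L S t i + (kk : ℕ) < Aoff L S (t + 1) i
                omega
            refine ⟨⟨Aoff L S t i + (kk : ℕ), hrlt⟩, hmem, ?_⟩
            rw [bspec ⟨Aoff L S t i + (kk : ℕ), hrlt⟩ ⟨t, htL⟩
              (show Aoff L S t i ≤ Aoff L S t i + (kk : ℕ) by omega)
              (show Aoff L S t i + (kk : ℕ) < Aoff L S (t + 1) i by omega)
              (show Aoff L S t i + (kk : ℕ) - Aoff L S t i < S ⟨t, htL⟩ i by omega)]
            have hkkeq : (⟨Aoff L S t i + (kk : ℕ) - Aoff L S t i,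
                show Aoff L S t i + (kk : ℕ) - Aoff L S t i < S ⟨t, htL⟩ i by omega⟩ :
                  Fin (S ⟨t, htL⟩ i)) = kk := by
              apply Fin.ext
              show Aoff L S t i + (kk : ℕ) - Aoff L S t i = (kk : ℕ)
              omega
            rw [hkkeq]
            rfl
        rw [hmid]
        exact hWsup ⟨t, htL⟩
      · exact ih t (by omega) ht
  refine ⟨b, ?_⟩
  intro t
  exact key (L + 1 - (t : ℕ)) (t : ℕ) (by omega) t.isLt

end Backward

section BackwardMain

variable {B : Fin n → Fin n → ℕ}

lemma backward_main {L : ℕ} {d : Fin n → ℕ} {S : Fin (L + 1) → Fin n → ℕ}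
    (hS : ∀ i, ∑ l, S l i = d i) (I : ∀ i j : Fin n, Set (QPath B i j →₀ K))
    (x : RepPt K n B d) (hx : InRep I x) (hgov : GovernedFilt L x S) :
    ∃ (x' : RepPt K n B d) (g : ∀ i : Fin n, GL (Fin (d i)) K),
      InRep I x' ∧ Triangular L x' (stdBlock L d S) ∧
      x = fun i j a => (g j).val * x' i j a * ((g i)⁻¹).val := by
  classical
  obtain ⟨F, hF0, hFlast, hFdec, hFarrow, hFdim⟩ := hgov
  choose b hb using fun i : Fin n =>
    exists_basis_fun i (hS i) F (hF0 i) (hFlast i) (fun l => hFdec l i) (fun l => hFdim l i)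
  have hspan_top : ∀ i, ⊤ ≤ Submodule.span K (Set.range (b i)) := by
    intro i
    have h0 := hb i 0
    rw [show ((0 : Fin (L + 2)) : ℕ) = 0 from rfl, Aoff_zero] at h0
    have huniv : {r : Fin (d i) | (0 : ℕ) ≤ (r : ℕ)} = Set.univ := by
      ext r; simp
    rw [huniv, Set.image_univ, hF0 i] at h0
    rw [h0]
  let Bi : ∀ i : Fin n, Module.Basis (Fin (d i)) K (Fin (d i) → K) := fun i =>
    basisOfTopLeSpanOfCardEqFinrank (b i) (hspan_top i)
      (by rw [Fintype.card_fin, Module.finrank_fin_fun])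
  let e : ∀ i : Fin n, (Fin (d i) → K) ≃ₗ[K] (Fin (d i) → K) := fun i =>
    (Pi.basisFun K (Fin (d i))).equiv (Bi i) (Equiv.refl _)
  have he_single : ∀ (i : Fin n) (r : Fin (d i)),
      e i (Pi.single r (1 : K)) = b i r := by
    intro i r
    have h1 : (Pi.single r (1 : K) : Fin (d i) → K) = Pi.basisFun K (Fin (d i)) r :=
      (Pi.basisFun_apply K (Fin (d i)) r).symm
    rw [h1, Module.Basis.equiv_apply, Equiv.refl_apply]
    show (Bi i) r = b i r
    rw [show ⇑(Bi i) = b i from coe_basisOfTopLeSpanOfCardEqFinrank _ _ _]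
  have hmap : ∀ (i : Fin n) (t : Fin (L + 2)),
      Submodule.map ((e i) : (Fin (d i) → K) →ₗ[K] (Fin (d i) → K))
        (tailB K L d S (t : ℕ) i) = F t i := by
    intro i t
    rw [tailB_eq_span, Submodule.map_span, Set.image_image]
    have himg : (fun r : Fin (d i) =>
        ((e i) : (Fin (d i) → K) →ₗ[K] (Fin (d i) → K)) (Pi.single r (1 : K)))
        = fun r => b i r := by
      funext r
      show e i (Pi.single r (1 : K)) = b i r
      exact he_single i r
    rw [himg]
    exact hb i t
  let gmat : ∀ i : Fin n, Matrix (Fin (d i)) (Fin (d i)) K := fun i =>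
    LinearMap.toMatrix' ((e i) : (Fin (d i) → K) →ₗ[K] (Fin (d i) → K))
  let ginv : ∀ i : Fin n, Matrix (Fin (d i)) (Fin (d i)) K := fun i =>
    LinearMap.toMatrix' ((e i).symm : (Fin (d i) → K) →ₗ[K] (Fin (d i) → K))
  have hmul : ∀ i, Matrix.mulVecLin (gmat i)
      = ((e i) : (Fin (d i) → K) →ₗ[K] (Fin (d i) → K)) := by
    intro i
    rw [show Matrix.mulVecLin (gmat i) = Matrix.toLin' (gmat i) from
      (Matrix.toLin'_apply' _).symm]
    exact Matrix.toLin'_toMatrix' _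
  have hmulinv : ∀ i, Matrix.mulVecLin (ginv i)
      = ((e i).symm : (Fin (d i) → K) →ₗ[K] (Fin (d i) → K)) := by
    intro i
    rw [show Matrix.mulVecLin (ginv i) = Matrix.toLin' (ginv i) from
      (Matrix.toLin'_apply' _).symm]
    exact Matrix.toLin'_toMatrix' _
  have hcomp1 : ∀ i, gmat i * ginv i = 1 := by
    intro i
    rw [show gmat i * ginv i
        = LinearMap.toMatrix' (((e i) : (Fin (d i) → K) →ₗ[K] (Fin (d i) → K))
          ∘ₗ ((e i).symm : (Fin (d i) → K) →ₗ[K] (Fin (d i) → K)))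
      from (LinearMap.toMatrix'_comp _ _).symm]
    rw [show ((e i) : (Fin (d i) → K) →ₗ[K] (Fin (d i) → K))
        ∘ₗ ((e i).symm : (Fin (d i) → K) →ₗ[K] (Fin (d i) → K)) = LinearMap.id from by
      ext v; simp]
    exact LinearMap.toMatrix'_id
  have hcomp2 : ∀ i, ginv i * gmat i = 1 := by
    intro i
    rw [show ginv i * gmat i
        = LinearMap.toMatrix' (((e i).symm : (Fin (d i) → K) →ₗ[K] (Fin (d i) → K))
          ∘ₗ ((e i) : (Fin (d i) → K) →ₗ[K] (Fin (d i) → K)))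
      from (LinearMap.toMatrix'_comp _ _).symm]
    rw [show ((e i).symm : (Fin (d i) → K) →ₗ[K] (Fin (d i) → K))
        ∘ₗ ((e i) : (Fin (d i) → K) →ₗ[K] (Fin (d i) → K)) = LinearMap.id from by
      ext v; simp]
    exact LinearMap.toMatrix'_id
  refine ⟨fun i j a => ginv j * x i j a * gmat i,
    fun i => ⟨gmat i, ginv i, hcomp1 i, hcomp2 i⟩, ?_, ?_, ?_⟩
  · exact inRep_conj I x _ gmat ginv hcomp1 hcomp2 (fun _ _ _ => rfl) hx
  · intro l i j a
    show Submodule.map (Matrix.mulVecLin (ginv j * x i j a * gmat i)) (stdBlock L d S l i)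
      ≤ ⨆ (m : Fin (L + 1)) (_ : l < m), stdBlock L d S m j
    rw [Matrix.mulVecLin_mul, Matrix.mulVecLin_mul, Submodule.map_comp, Submodule.map_comp]
    calc Submodule.map (Matrix.mulVecLin (ginv j))
          (Submodule.map (Matrix.mulVecLin (x i j a))
            (Submodule.map (Matrix.mulVecLin (gmat i)) (stdBlock L d S l i)))
        ≤ Submodule.map (Matrix.mulVecLin (ginv j))
          (Submodule.map (Matrix.mulVecLin (x i j a))
            (Submodule.map (Matrix.mulVecLin (gmat i))
              (tailB K L d S ((l.castSucc : Fin (L + 2)) : ℕ) i))) := by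
          exact Submodule.map_mono (Submodule.map_mono (Submodule.map_mono
            (stdBlock_le_tailB l i)))
      _ = Submodule.map (Matrix.mulVecLin (ginv j))
          (Submodule.map (Matrix.mulVecLin (x i j a)) (F l.castSucc i)) := by
          rw [hmul i, hmap i l.castSucc]
      _ ≤ Submodule.map (Matrix.mulVecLin (ginv j)) (F l.succ j) :=
          Submodule.map_mono (hFarrow l i j a)
      _ = tailB K L d S ((l.succ : Fin (L + 2)) : ℕ) j := by
          rw [hmulinv j, ← hmap j l.succ, ← Submodule.map_comp]
          rw [show ((e j).symm : (Fin (d j) → K) →ₗ[K] (Fin (d j) → K))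
              ∘ₗ ((e j) : (Fin (d j) → K) →ₗ[K] (Fin (d j) → K)) = LinearMap.id from by
            ext v; simp]
          rw [Submodule.map_id]
      _ ≤ ⨆ (m : Fin (L + 1)) (_ : l < m), stdBlock L d S m j := by
          refine le_trans (tailB_le_iSup (hS j) _) ?_
          apply iSup_le; intro m; apply iSup_le; intro hm
          have hlm : l < m := by
            rw [Fin.lt_def]
            have h1 : ((l.succ : Fin (L + 2)) : ℕ) ≤ (m : ℕ) := hm
            rw [Fin.val_succ] at h1
            omega
          exact le_iSup₂ (f := fun (m : Fin (L + 1)) (_ : l < m) => stdBlock L d S m j) m hlm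
  · funext i j a
    show x i j a = gmat j * (ginv j * x i j a * gmat i) * ginv i
    have hassoc : gmat j * (ginv j * x i j a * gmat i) * ginv i
        = (gmat j * ginv j) * x i j a * (gmat i * ginv i) := by
      simp only [Matrix.mul_assoc]
    rw [hassoc, hcomp1 i, hcomp1 j, Matrix.one_mul, Matrix.mul_one]

end BackwardMain

end GLHull

/-- A `Λ`-module `M_x` with dimension vector `d` lies in the `GL(d)`-stable
hull of the triangular variety `Rep^tri(≥ S)` (the points of the representation variety of
`Λ = KQ/I` that are strictly lower-triangular with respect to the standard decomposition of
`K^d` induced by `S`) if and only if `M_x` admits a filtration governed by `S`. -/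
theorem gl_hull_of_triangular_iff_governed
    {K : Type*} [Field K] {n : ℕ} (L : ℕ) (B : Fin n → Fin n → ℕ) (d : Fin n → ℕ)
    (S : Fin (L + 1) → Fin n → ℕ) (hS : ∀ i, ∑ l, S l i = d i)
    (I : ∀ i j : Fin n, Set (QPath B i j →₀ K))
    (hlong : ∀ (i j : Fin n) (p : QPath B i j), L + 1 ≤ QPath.length p →
      Finsupp.single p (1 : K) ∈ I i j)
    (x : RepPt K n B d) (hx : InRep I x) :
    (∃ (x' : RepPt K n B d) (g : ∀ i : Fin n, GL (Fin (d i)) K),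
        InRep I x' ∧ Triangular L x' (stdBlock L d S) ∧
        x = fun i j a => (g j).val * x' i j a * ((g i)⁻¹).val) ↔
      GovernedFilt L x S := by
  constructor
  · rintro ⟨x', g, _hx', htri, hconj⟩
    exact GLHull.forward hS x x' g htri hconj
  · intro hgov
    exact GLHull.backward_main hS I x hx hgov
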